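/- Let T be a triangulated category with products and K ⊆ T a colocalizing subcategory (a triangulated subcategory closed under products). The inclusion functor I : K → T has a left adjoint if and only if every object of T admits a K-preenvelope. -/

import Mathlib

open CategoryTheory CategoryTheory.Limits CategoryTheory.Pretriangulated

universe v u

namespace CategoryTheory.Triangulated

/-- The structure `Triangulated.Subcategory` of Mathlib (December 2024), removed since:
a triangulated subcategory of a pretriangulated category `C`. -/
structure Subcategory (C : Type*) [Category C] [HasZeroObject C] [HasShift C ℤ]
    [Preadditive C] [∀ n : ℤ, (shiftFunctor C n).Additive] [Pretriangulated C] where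
  /-- the underlying predicate on objects of a triangulated subcategory -/
  P : C → Prop
  zero' : ∃ (Z : C) (_ : IsZero Z), P Z
  shift (X : C) (n : ℤ) : P X → P (X⟦n⟧)
  ext₂' (T : Triangle C) (_ : T ∈ distTriang C) : P T.obj₁ → P T.obj₃ →
    ObjectProperty.isoClosure P T.obj₂

end CategoryTheory.Triangulated

namespace CategoryTheory.Triangulated.Subcategory

lemma ext₁ {C : Type*} [Category C] [HasZeroObject C] [HasShift C ℤ]
    [Preadditive C] [∀ n : ℤ, (shiftFunctor C n).Additive] [Pretriangulated C]
    (S : Subcategory C) [ObjectProperty.IsClosedUnderIsomorphisms S.P]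
    (T : Triangle C) (hT : T ∈ distTriang C) (h₂ : S.P T.obj₂) (h₃ : S.P T.obj₃) :
    S.P T.obj₁ := by
  have h := S.ext₂' _ (inv_rot_of_distTriang _ hT) (S.shift _ _ h₃) h₂
  rwa [ObjectProperty.isoClosure_eq_self] at h

end CategoryTheory.Triangulated.Subcategory

section Aux

variable {T : Type u} [Category.{v} T] [Preadditive T] [HasZeroObject T]
    [HasShift T ℤ] [∀ n : ℤ, (shiftFunctor T n).Additive] [Pretriangulated T]
    [HasProducts.{v} T]

/-- The "geometric series" surjectivity: for an idempotent `c` on `Y`, postcomposition with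
`d = 1 - shift ∘ c` on the countable product is surjective on morphism groups. -/
lemma statement7_aux_dsurj (Y : T) (c : Y ⟶ Y) (hc : c ≫ c = c) (Q : T)
    (t : Q ⟶ ∏ᶜ (fun _ : ULift.{v} ℕ => Y)) :
    ∃ b : Q ⟶ ∏ᶜ (fun _ : ULift.{v} ℕ => Y),
      b ≫ Pi.lift (fun n : ULift.{v} ℕ =>
        Pi.π (fun _ : ULift.{v} ℕ => Y) n -
          Pi.π (fun _ : ULift.{v} ℕ => Y) (ULift.up (n.down + 1)) ≫ c) = t := by
  set pr : ULift.{v} ℕ → ((∏ᶜ (fun _ : ULift.{v} ℕ => Y)) ⟶ Y) :=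
    fun n => Pi.π (fun _ : ULift.{v} ℕ => Y) n with hpr
  set tn : ℕ → (Q ⟶ Y) := fun n => t ≫ pr (ULift.up n) with htn
  refine ⟨Pi.lift (fun n : ULift.{v} ℕ =>
      tn n.down ≫ (𝟙 Y - c) - (∑ k ∈ Finset.range n.down, tn k) ≫ c), ?_⟩
  apply Pi.hom_ext
  intro n
  rw [Category.assoc, Pi.lift_π, Preadditive.comp_sub, Pi.lift_π, ← Category.assoc, Pi.lift_π]
  -- goal: (tn n ≫ (1 - c) - (∑ Finset.range n) ≫ c)
  --     - (tn (n+1) ≫ (1-c) - (∑ range (n+1)) ≫ c) ≫ c = t ≫ pr n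
  obtain ⟨n⟩ := n
  have h1 : ((𝟙 Y - c) : Y ⟶ Y) ≫ c = 0 := by
    simp [Preadditive.sub_comp, hc]
  have h2 : (tn (n + 1) ≫ (𝟙 Y - c) - (∑ k ∈ Finset.range (n + 1), tn k) ≫ c) ≫ c
      = - ((∑ k ∈ Finset.range (n + 1), tn k) ≫ c) := by
    rw [Preadditive.sub_comp, Category.assoc, h1, comp_zero, zero_sub,
      Category.assoc, hc]
  have h3 : t ≫ pr (ULift.up n) = tn n := rfl
  rw [h2, sub_neg_eq_add, Finset.sum_range_succ, Preadditive.add_comp, h3,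
    Preadditive.comp_sub, Category.comp_id]
  abel

/-- Splitting of an idempotent on an object of `S`, with the image inside `S`:
this is (the dual of) the Bökstedt–Neeman argument, using a countable homotopy limit. -/
lemma statement7_aux_split (S : Triangulated.Subcategory T) [ObjectProperty.IsClosedUnderIsomorphisms S.P]
    (hprod : ∀ {J : Type v} (f : J → T), (∀ j, S.P (f j)) → S.P (∏ᶜ f))
    (Y : T) (hY : S.P Y) (c : Y ⟶ Y) (hc : c ≫ c = c) :
    ∃ (L : T) (_ : S.P L) (π : Y ⟶ L) (ρ : L ⟶ Y), π ≫ ρ = c ∧ ρ ≫ π = 𝟙 L := by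
  set P : T := ∏ᶜ (fun _ : ULift.{v} ℕ => Y) with hP
  set pr : ULift.{v} ℕ → (P ⟶ Y) := fun n => Pi.π (fun _ : ULift.{v} ℕ => Y) n with hpr
  set d : P ⟶ P := Pi.lift (fun n : ULift.{v} ℕ =>
      pr n - pr (ULift.up (n.down + 1)) ≫ c) with hd
  have hPmem : S.P P := hprod _ (fun _ => hY)
  -- surjectivity of postcomposition with `d`
  have hsurj : ∀ (Q : T) (t : Q ⟶ P), ∃ b : Q ⟶ P, b ≫ d = t :=
    statement7_aux_dsurj Y c hc
  -- surjectivity of postcomposition with `d⟦-1⟧'`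
  have hsurj' : ∀ (Q : T) (t : Q ⟶ P⟦(-1 : ℤ)⟧),
      ∃ b : Q ⟶ P⟦(-1 : ℤ)⟧, b ≫ d⟦(-1 : ℤ)⟧' = t := by
    intro Q t
    set E := shiftEquiv T (1 : ℤ) with hE
    obtain ⟨b', hb'⟩ := hsurj (E.functor.obj Q) (E.functor.map t ≫ E.counit.app P)
    refine ⟨E.unit.app Q ≫ E.inverse.map b', ?_⟩
    show (E.unit.app Q ≫ E.inverse.map b') ≫ E.inverse.map d = t
    rw [Category.assoc, ← Functor.map_comp, hb']
    exact (E.toAdjunction.homEquiv Q P).apply_symm_apply t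
  -- the homotopy limit triangle
  obtain ⟨L, r, m, hTr⟩ := Pretriangulated.distinguished_cocone_triangle₁ d
  have hL : S.P L := S.ext₁ _ hTr hPmem hPmem
  have hrd : r ≫ d = 0 := comp_distTriang_mor_zero₁₂ _ hTr
  have hdm : d ≫ m = 0 := comp_distTriang_mor_zero₂₃ _ hTr
  -- components of r
  have hrcomp : ∀ n : ℕ, r ≫ pr (ULift.up n) = (r ≫ pr (ULift.up (n + 1))) ≫ c := by
    intro n
    have := congrArg (fun q => q ≫ pr (ULift.up n)) hrd
    simp only [Category.assoc, zero_comp] at this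
    rw [hd, Pi.lift_π] at this
    rw [Preadditive.comp_sub, sub_eq_zero] at this
    simpa only [Category.assoc] using this
  have hrfix : ∀ n : ℕ, (r ≫ pr (ULift.up n)) ≫ c = r ≫ pr (ULift.up n) := by
    intro n
    rw [hrcomp n]
    simp only [Category.assoc, hc]
  have hrconst : ∀ n : ℕ, r ≫ pr (ULift.up n) = r ≫ pr (ULift.up 0) := by
    intro n
    induction n with
    | zero => rfl
    | succ k ih =>
      rw [← ih, hrcomp k, hrfix (k + 1)]
  set ρ : L ⟶ Y := r ≫ pr (ULift.up 0) with hρ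
  have hρc : ρ ≫ c = ρ := hrfix 0
  -- construct π
  have hacd : (Pi.lift (fun _ : ULift.{v} ℕ => c)) ≫ d = 0 := by
    apply Pi.hom_ext
    intro n
    rw [Category.assoc, hd, Pi.lift_π, Preadditive.comp_sub, Pi.lift_π,
      ← Category.assoc, Pi.lift_π, hc, sub_self, zero_comp]
  obtain ⟨π₀, hπ₀⟩ := Pretriangulated.Triangle.coyoneda_exact₂ _ hTr
    (Pi.lift (fun _ : ULift.{v} ℕ => c)) hacd
  let π : Y ⟶ L := π₀
  have hπ : Pi.lift (fun _ : ULift.{v} ℕ => c) = π ≫ r := by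
    exact hπ₀
  have hπr : ∀ n : ULift.{v} ℕ, π ≫ r ≫ pr n = c := by
    intro n
    rw [← Category.assoc, ← hπ, Pi.lift_π]
  have hπρ : π ≫ ρ = c := by
    rw [hρ, hπr]
  -- ρ ≫ π = 𝟙 L
  have hkill : (𝟙 L - ρ ≫ π) ≫ r = 0 := by
    apply Pi.hom_ext
    intro n
    obtain ⟨n⟩ := n
    simp only [Preadditive.sub_comp, Category.id_comp, Category.assoc, zero_comp]
    rw [hπr, hρc, hrconst n, sub_self]
  obtain ⟨g, hg⟩ := Pretriangulated.Triangle.coyoneda_exact₂ _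
    (inv_rot_of_distTriang _ hTr) (𝟙 L - ρ ≫ π) hkill
  obtain ⟨b, hb⟩ := hsurj' L g
  have hdm' : d⟦(-1 : ℤ)⟧' ≫ m⟦(-1 : ℤ)⟧' = 0 := by
    rw [← Functor.map_comp, hdm, Functor.map_zero]
  have hkey : d⟦(-1 : ℤ)⟧' ≫ (Triangle.mk r d m).invRotate.mor₁ = 0 := by
    have hmor : (Triangle.mk r d m).invRotate.mor₁
        = -(m⟦(-1 : ℤ)⟧' ≫ (shiftEquiv T (1 : ℤ)).unitIso.inv.app L) := rfl
    rw [hmor]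
    exact (Preadditive.comp_neg _ _).trans (neg_eq_zero.mpr
      ((Category.assoc _ _ _).symm.trans ((congrArg (· ≫ _) hdm').trans zero_comp)))
  have hzero : (𝟙 L - ρ ≫ π) = 0 := by
    rw [hg, ← hb]
    exact (Category.assoc _ _ _).trans ((congrArg (b ≫ ·) hkey).trans comp_zero)
  have hρπ : ρ ≫ π = 𝟙 L := (sub_eq_zero.mp hzero).symm
  exact ⟨L, hL, π, ρ, hπρ, hρπ⟩


/-- Construction of the reflection (initial object of the comma category) from preenvelopes. -/
lemma statement7_aux_reflection (S : Triangulated.Subcategory T) [ObjectProperty.IsClosedUnderIsomorphisms S.P]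
    (hprod : ∀ {J : Type v} (f : J → T), (∀ j, S.P (f j)) → S.P (∏ᶜ f))
    (henv : ∀ X : T, ∃ (Y : T) (_ : S.P Y) (f : X ⟶ Y),
        ∀ (Z : T), S.P Z → ∀ g : X ⟶ Z, ∃ h : Y ⟶ Z, f ≫ h = g)
    (X : T) :
    ∃ (L : T) (_ : S.P L) (l : X ⟶ L), ∀ (Z : T), S.P Z → ∀ z : X ⟶ Z,
      ∃! h : L ⟶ Z, l ≫ h = z := by
  obtain ⟨Y, hY, f, hf⟩ := henv X
  set β : Y ⟶ ∏ᶜ (fun _ : {g : Y ⟶ Y // f ≫ g = 0} => Y) :=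
    Pi.lift (fun g => g.1) with hβ
  obtain ⟨V, p, mV, hTV⟩ := Pretriangulated.distinguished_cocone_triangle₁ β
  have hV : S.P V := S.ext₁ _ hTV hY (hprod _ (fun _ => hY))
  have hpβ : p ≫ β = 0 := comp_distTriang_mor_zero₁₂ _ hTV
  have hpg : ∀ g : Y ⟶ Y, f ≫ g = 0 → p ≫ g = 0 := by
    intro g hg
    have h1 : β ≫ Pi.π (fun _ : {g : Y ⟶ Y // f ≫ g = 0} => Y) ⟨g, hg⟩ = g :=
      Pi.lift_π _ _
    calc p ≫ g = p ≫ β ≫ Pi.π (fun _ : {g : Y ⟶ Y // f ≫ g = 0} => Y) ⟨g, hg⟩ := by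
          rw [h1]
      _ = (p ≫ β) ≫ _ := by rw [Category.assoc]
      _ = 0 := by rw [hpβ, zero_comp]
  have hfβ : f ≫ β = 0 := by
    apply Pi.hom_ext
    intro g
    rw [Category.assoc, Pi.lift_π, g.2, zero_comp]
  obtain ⟨v, hv⟩ := Pretriangulated.Triangle.coyoneda_exact₂ _ hTV f hfβ
  let v' : X ⟶ V := v
  have hv' : f = v' ≫ p := hv
  have star : ∀ (Z : T), S.P Z → ∀ k : Y ⟶ Z, f ≫ k = 0 → p ≫ k = 0 := by
    intro Z hZ k hk
    obtain ⟨W, e, mW, hTW⟩ := Pretriangulated.distinguished_cocone_triangle₁ k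
    have hW : S.P W := S.ext₁ _ hTW hY hZ
    obtain ⟨t', ht'⟩ := Pretriangulated.Triangle.coyoneda_exact₂ _ hTW f hk
    let t'' : X ⟶ W := t'
    have ht'' : f = t'' ≫ e := ht'
    obtain ⟨t, ht⟩ := hf W hW t''
    have hek : e ≫ k = 0 := comp_distTriang_mor_zero₁₂ _ hTW
    have h1 : f ≫ (t ≫ e - 𝟙 Y) = 0 := by
      rw [Preadditive.comp_sub, Category.comp_id, ← Category.assoc, ht, ← ht'', sub_self]
    have h2 := hpg _ h1
    rw [Preadditive.comp_sub, Category.comp_id, sub_eq_zero] at h2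
    calc p ≫ k = (p ≫ t ≫ e) ≫ k := by rw [h2]
      _ = (p ≫ t) ≫ e ≫ k := by simp only [Category.assoc]
      _ = 0 := by rw [hek, comp_zero]
  obtain ⟨s, hs⟩ := hf V hV v'
  set c : Y ⟶ Y := s ≫ p with hcdef
  have hfc : f ≫ c = f := by
    rw [hcdef, ← Category.assoc, hs, ← hv']
  have hkillc : ∀ (Z : T), S.P Z → ∀ k : Y ⟶ Z, f ≫ k = 0 → c ≫ k = 0 := by
    intro Z hZ k hk
    rw [hcdef, Category.assoc, star Z hZ k hk, comp_zero]
  have hcc : c ≫ c = c := by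
    have h1 : f ≫ (c - 𝟙 Y) = 0 := by
      rw [Preadditive.comp_sub, hfc, Category.comp_id, sub_self]
    have h2 := hkillc Y hY _ h1
    rw [Preadditive.comp_sub, Category.comp_id, sub_eq_zero] at h2
    exact h2
  obtain ⟨L, hL, π, ρ, hπρ, hρπ⟩ := statement7_aux_split S @hprod Y hY c hcc
  have hρc : ρ ≫ c = ρ := by
    rw [← hπρ, ← Category.assoc, hρπ, Category.id_comp]
  refine ⟨L, hL, f ≫ π, ?_⟩
  intro Z hZ z
  obtain ⟨g, hg⟩ := hf Z hZ z
  have hmain : (f ≫ π) ≫ ρ ≫ g = z := by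
    calc (f ≫ π) ≫ ρ ≫ g = (f ≫ π ≫ ρ) ≫ g := by simp only [Category.assoc]
      _ = (f ≫ c) ≫ g := by rw [hπρ]
      _ = z := by rw [hfc, hg]
  have hkey : ∀ h0 : L ⟶ Z, (f ≫ π) ≫ h0 = 0 → h0 = 0 := by
    intro h0 hh0
    have h1 : f ≫ π ≫ h0 = 0 := by rw [← Category.assoc]; exact hh0
    have h2 : c ≫ π ≫ h0 = 0 := hkillc Z hZ _ h1
    calc h0 = (ρ ≫ π) ≫ h0 := by rw [hρπ, Category.id_comp]
      _ = ρ ≫ π ≫ h0 := by rw [Category.assoc]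
      _ = (ρ ≫ c) ≫ π ≫ h0 := by rw [hρc]
      _ = ρ ≫ c ≫ π ≫ h0 := by rw [Category.assoc]
      _ = ρ ≫ 0 := by rw [h2]
      _ = 0 := comp_zero
  refine ⟨ρ ≫ g, hmain, ?_⟩
  intro h' hh'
  have h3 : (f ≫ π) ≫ (h' - ρ ≫ g) = 0 := by
    rw [Preadditive.comp_sub, hh', hmain, sub_self]
  exact sub_eq_zero.mp (hkey _ h3)

end Aux

/-- Let `T` be a triangulated category with products and `K ⊆ T` a
colocalizing subcategory (a triangulated subcategory closed under products). The inclusion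
functor `I : K ⥤ T` has a left adjoint (i.e. `I` is a right adjoint) if and only if every
object of `T` admits a `K`-preenvelope. -/
theorem statement7 (T : Type u) [Category.{v} T] [Preadditive T] [HasZeroObject T]
    [HasShift T ℤ] [∀ n : ℤ, (shiftFunctor T n).Additive] [Pretriangulated T]
    [IsTriangulated T] [HasProducts.{v} T]
    (S : Triangulated.Subcategory T) [ObjectProperty.IsClosedUnderIsomorphisms S.P]
    (hprod : ∀ {J : Type v} (f : J → T), (∀ j, S.P (f j)) → S.P (∏ᶜ f)) :
    (ObjectProperty.ι S.P).IsRightAdjoint ↔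
      (∀ X : T, ∃ (Y : T) (_ : S.P Y) (f : X ⟶ Y),
        ∀ (Z : T), S.P Z → ∀ g : X ⟶ Z, ∃ h : Y ⟶ Z, f ≫ h = g) := by
  constructor
  · intro hra
    obtain ⟨F, ⟨adj⟩⟩ := hra.exists_leftAdjoint
    intro X
    refine ⟨(F.obj X).obj, (F.obj X).property, adj.unit.app X, ?_⟩
    intro Z hZ g
    refine ⟨((adj.homEquiv X ⟨Z, hZ⟩).symm g).hom, ?_⟩
    have h1 := adj.homEquiv_unit (X := X) (Y := ⟨Z, hZ⟩)
      (f := (adj.homEquiv X ⟨Z, hZ⟩).symm g)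
    have h2 := (adj.homEquiv X ⟨Z, hZ⟩).apply_symm_apply g
    rw [h1] at h2
    exact h2
  · intro henv
    have H := statement7_aux_reflection S @hprod henv
    choose L hL l hUniv using H
    have bij : ∀ (X : T) (K : ObjectProperty.FullSubcategory S.P),
        Function.Bijective (fun h : (⟨L X, hL X⟩ : ObjectProperty.FullSubcategory S.P) ⟶ K => l X ≫ h.hom) := by
      intro X K
      constructor
      · intro h₁ h₂ hh
        ext
        obtain ⟨h₀, hh₀, huniq⟩ := hUniv X K.obj K.property (l X ≫ h₂.hom)
        rw [huniq h₁.hom hh, huniq h₂.hom rfl]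
      · intro z
        obtain ⟨h₀, hh₀, _⟩ := hUniv X K.obj K.property z
        exact ⟨⟨h₀⟩, hh₀⟩
    have he : ∀ (X : T) (K K' : ObjectProperty.FullSubcategory S.P) (g : K ⟶ K')
        (h : (⟨L X, hL X⟩ : ObjectProperty.FullSubcategory S.P) ⟶ K),
        (Equiv.ofBijective _ (bij X K')) (h ≫ g)
          = (Equiv.ofBijective _ (bij X K)) h ≫ (ObjectProperty.ι S.P).map g := by
      intro X K K' g h
      show l X ≫ (h.hom ≫ g.hom) = (l X ≫ h.hom) ≫ g.hom
      rw [Category.assoc]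
    exact ⟨⟨Adjunction.leftAdjointOfEquiv (fun X K => Equiv.ofBijective _ (bij X K)) he,
      ⟨Adjunction.adjunctionOfEquivLeft _ he⟩⟩⟩
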